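/- For all integers 0 ≤ j ≤ i, ∑_{k=j}^{i} (-1)^{i-k} binom(i+k, i-k) · C_{k-j}^{(2j+1)} = (if i = j then 1 else 0), as an identity in ℚ. Equivalently, the inverse of the lower-triangular matrix ((-1)^{i-j} binom(i+j, i-j))_{i,j ≥ 0} is the Catalan triangle (C_{i-j}^{(2j+1)})_{i,j ≥ 0} = (((2j+1)/(i+j+1))·binom(2i, i-j))_{i,j ≥ 0}. -/

import Mathlib

/-- `genCatalan n k` is the number `C_n^{(k)} = (k/(2n+k))·binom(2n+k, n)` as a rational number. -/
def genCatalan (n k : ℕ) : ℚ :=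
  ((k : ℚ) / ((2 * n + k : ℕ) : ℚ)) * (Nat.choose (2 * n + k) n : ℚ)

open Nat Finset

lemma key1 (j b a : ℕ) :
    ((b+a+2 : ℕ) : ℚ) * ((2*j+b+a+3 : ℕ) : ℚ) * ((2*j+2*b+a+3).choose (a+1) : ℚ)
        * ((2*j+2*b+3).choose (b+1) : ℚ)
      = ((2*j+2*b+3 : ℕ) : ℚ) * ((2*j+2*b+a+4 : ℕ) : ℚ)
          * ((2*j+2*b+a+3).choose (2*j+2*b+3) : ℚ) * ((2*j+2*b+3).choose (b+1) : ℚ)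
        + ((2*j+2*b+3 : ℕ) : ℚ) * ((2*j+2*b+a+3 : ℕ) : ℚ)
          * ((2*j+2*b+a+2).choose (2*j+2*b+1) : ℚ) * ((2*j+2*b+1).choose b : ℚ) := by
  rw [Nat.cast_choose ℚ (by omega : a+1 ≤ 2*j+2*b+a+3),
      Nat.cast_choose ℚ (by omega : b+1 ≤ 2*j+2*b+3),
      Nat.cast_choose ℚ (by omega : 2*j+2*b+3 ≤ 2*j+2*b+a+3),
      Nat.cast_choose ℚ (by omega : 2*j+2*b+1 ≤ 2*j+2*b+a+2),
      Nat.cast_choose ℚ (by omega : b ≤ 2*j+2*b+1)]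
  rw [show 2*j+2*b+a+3 - (a+1) = 2*j+2*b+2 by omega,
      show 2*j+2*b+3 - (b+1) = 2*j+b+2 by omega,
      show 2*j+2*b+a+3 - (2*j+2*b+3) = a by omega,
      show 2*j+2*b+a+2 - (2*j+2*b+1) = a+1 by omega,
      show 2*j+2*b+1 - b = 2*j+b+1 by omega]
  rw [show (2*j+2*b+a+3)! = (2*j+2*b+a+3) * (2*j+2*b+a+2)! by
        rw [show 2*j+2*b+a+3 = (2*j+2*b+a+2)+1 by omega]; exact Nat.factorial_succ _,
      show (2*j+2*b+3)! = (2*j+2*b+3) * ((2*j+2*b+2) * (2*j+2*b+1)!) by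
        rw [show 2*j+2*b+3 = (2*j+2*b+1)+1+1 by omega, Nat.factorial_succ, Nat.factorial_succ],
      show (2*j+2*b+2)! = (2*j+2*b+2) * (2*j+2*b+1)! by
        rw [show 2*j+2*b+2 = (2*j+2*b+1)+1 by omega]; exact Nat.factorial_succ _,
      show (a+1)! = (a+1) * a ! from Nat.factorial_succ _,
      show (b+1)! = (b+1) * b ! from Nat.factorial_succ _,
      show (2*j+b+2)! = (2*j+b+2) * (2*j+b+1)! by
        rw [show 2*j+b+2 = (2*j+b+1)+1 by omega]; exact Nat.factorial_succ _]
  push_cast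
  field_simp
  ring

lemma key0 (j b : ℕ) :
    ((b+1 : ℕ) : ℚ) * ((2*j+b+2 : ℕ) : ℚ) * ((2*j+2*b+3).choose (b+1) : ℚ)
      = ((2*j+2*b+3 : ℕ) : ℚ) * ((2*j+2*b+2 : ℕ) : ℚ) * ((2*j+2*b+1).choose b : ℚ) := by
  rw [Nat.cast_choose ℚ (by omega : b+1 ≤ 2*j+2*b+3),
      Nat.cast_choose ℚ (by omega : b ≤ 2*j+2*b+1)]
  rw [show 2*j+2*b+3 - (b+1) = 2*j+b+2 by omega,
      show 2*j+2*b+1 - b = 2*j+b+1 by omega]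
  rw [show (2*j+2*b+3)! = (2*j+2*b+3) * ((2*j+2*b+2) * (2*j+2*b+1)!) by
        rw [show 2*j+2*b+3 = (2*j+2*b+1)+1+1 by omega, Nat.factorial_succ, Nat.factorial_succ],
      show (b+1)! = (b+1) * b ! from Nat.factorial_succ _,
      show (2*j+b+2)! = (2*j+b+2) * (2*j+b+1)! by
        rw [show 2*j+b+2 = (2*j+b+1)+1 by omega]; exact Nat.factorial_succ _]
  push_cast
  field_simp

lemma keyb (j d : ℕ) :
    ((d+1 : ℕ) : ℚ) * ((2*j+d+1).choose (d+1) : ℚ)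
      = ((2*j+1 : ℕ) : ℚ) * ((2*j+d+1).choose (2*j+1) : ℚ) := by
  rw [Nat.cast_choose ℚ (by omega : d+1 ≤ 2*j+d+1),
      Nat.cast_choose ℚ (by omega : 2*j+1 ≤ 2*j+d+1)]
  rw [show 2*j+d+1 - (d+1) = 2*j by omega,
      show 2*j+d+1 - (2*j+1) = d by omega]
  rw [show (d+1)! = (d+1) * d ! from Nat.factorial_succ _,
      show (2*j+1)! = (2*j+1) * (2*j)! from Nat.factorial_succ _]
  push_cast
  field_simp

lemma step_eq (i j m : ℕ) (hj : j ≤ m) (hm : m < i) :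
    (-1:ℚ)^(i-m) * ((2*j+1 : ℕ) : ℚ) * ((i+m+1 : ℕ) : ℚ) / ((i-j : ℕ) : ℚ) / ((i+j+1 : ℕ) : ℚ)
        * ((i+m).choose (2*m+1) : ℚ) * ((2*m+1).choose (m-j) : ℚ)
      + (-1:ℚ)^(i-(m+1)) * ((i+(m+1)).choose (i-(m+1)) : ℚ)
        * (((2*j+1 : ℕ) : ℚ) / ((2*(m+1)+1 : ℕ) : ℚ) * ((2*(m+1)+1).choose ((m+1)-j) : ℚ))
      = (-1:ℚ)^(i-(m+1)) * ((2*j+1 : ℕ) : ℚ) * ((i+(m+1)+1 : ℕ) : ℚ) / ((i-j : ℕ) : ℚ) / ((i+j+1 : ℕ) : ℚ)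
        * ((i+(m+1)).choose (2*(m+1)+1) : ℚ) * ((2*(m+1)+1).choose ((m+1)-j) : ℚ) := by
  obtain ⟨b, rfl⟩ : ∃ b, m = j + b := ⟨m - j, by omega⟩
  rcases Nat.lt_or_ge (j+b+1) i with h2 | h2
  · obtain ⟨a, rfl⟩ : ∃ a, i = j + b + 2 + a := ⟨i - (j+b+2), by omega⟩
    simp only [show j + b + 2 + a - (j + b) = a + 2 by omega,
      show j + b + 2 + a - (j + b + 1) = a + 1 by omega,
      show j + b + 2 + a - j = b + a + 2 by omega,
      show j + b + 2 + a + (j + b) = 2*j+2*b+a+2 by omega,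
      show j + b + 2 + a + (j + b) + 1 = 2*j+2*b+a+3 by omega,
      show j + b + 2 + a + (j + b + 1) = 2*j+2*b+a+3 by omega,
      show j + b + 2 + a + (j + b + 1) + 1 = 2*j+2*b+a+4 by omega,
      show j + b + 2 + a + j + 1 = 2*j+b+a+3 by omega,
      show 2*(j+b)+1 = 2*j+2*b+1 by omega,
      show 2*(j+b+1)+1 = 2*j+2*b+3 by omega,
      show j + b - j = b by omega,
      show j + b + 1 - j = b + 1 by omega]
    rw [show ((-1:ℚ))^(a+2) = (-1)^a by rw [pow_add]; norm_num,
        show ((-1:ℚ))^(a+1) = -(-1)^a by rw [pow_add]; norm_num]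
    have h := key1 j b a
    push_cast at h ⊢
    have d1 : ((b:ℚ)+a+2) ≠ 0 := by positivity
    have d2 : (2*(j:ℚ)+b+a+3) ≠ 0 := by positivity
    have d3 : (2*(j:ℚ)+2*b+3) ≠ 0 := by positivity
    field_simp
    linear_combination -h
  · obtain rfl : i = j + b + 1 := by omega
    simp only [show j + b + 1 - (j + b) = 1 by omega,
      show j + b + 1 - (j + b + 1) = 0 by omega,
      show j + b + 1 - j = b + 1 by omega,
      show j + b + 1 + (j + b) = 2*j+2*b+1 by omega,
      show j + b + 1 + (j + b) + 1 = 2*j+2*b+2 by omega,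
      show j + b + 1 + (j + b + 1) = 2*j+2*b+2 by omega,
      show j + b + 1 + (j + b + 1) + 1 = 2*j+2*b+3 by omega,
      show j + b + 1 + j + 1 = 2*j+b+2 by omega,
      show 2*(j+b)+1 = 2*j+2*b+1 by omega,
      show 2*(j+b+1)+1 = 2*j+2*b+3 by omega,
      show j + b - j = b by omega]
    rw [show (2*j+2*b+2).choose (2*j+2*b+3) = 0 from Nat.choose_eq_zero_of_lt (by omega)]
    simp only [Nat.choose_self, Nat.choose_zero_right, Nat.cast_zero, Nat.cast_one,
      pow_zero, pow_one]
    have h := key0 j b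
    push_cast at h ⊢
    have d1 : ((b:ℚ)+1) ≠ 0 := by positivity
    have d2 : (2*(j:ℚ)+b+2) ≠ 0 := by positivity
    have d3 : (2*(j:ℚ)+2*b+3) ≠ 0 := by positivity
    field_simp
    linear_combination h

lemma keyb' (i j : ℕ) (h : j < i) :
    (-1:ℚ)^(i-j) * ((i+j).choose (i-j) : ℚ)
        * (((2*j+1 : ℕ) : ℚ) / ((2*j+1 : ℕ) : ℚ) * ((2*j+1).choose (j-j) : ℚ))
      = (-1:ℚ)^(i-j) * ((2*j+1 : ℕ) : ℚ) * ((i+j+1 : ℕ) : ℚ) / ((i-j : ℕ) : ℚ) / ((i+j+1 : ℕ) : ℚ)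
        * ((i+j).choose (2*j+1) : ℚ) * ((2*j+1).choose (j-j) : ℚ) := by
  obtain ⟨d, rfl⟩ : ∃ d, i = j + (d+1) := ⟨i - j - 1, by omega⟩
  simp only [show j + (d+1) - j = d + 1 by omega, show j + (d+1) + j = 2*j+d+1 by omega,
    show j + (d+1) + j + 1 = 2*j+d+2 by omega, Nat.sub_self, Nat.choose_zero_right,
    Nat.cast_one]
  have h := keyb j d
  push_cast at h ⊢
  have d1 : ((d:ℚ)+1) ≠ 0 := by positivity
  have d2 : (2*(j:ℚ)+d+2) ≠ 0 := by positivity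
  have d3 : (2*(j:ℚ)+1) ≠ 0 := by positivity
  field_simp
  linear_combination h

lemma tele (i j : ℕ) (hj : j < i) : ∀ m, j ≤ m → m ≤ i →
    ∑ k ∈ Finset.Icc j m, (-1:ℚ)^(i-k) * ((i+k).choose (i-k) : ℚ)
        * (((2*j+1 : ℕ) : ℚ) / ((2*k+1 : ℕ) : ℚ) * ((2*k+1).choose (k-j) : ℚ))
      = (-1:ℚ)^(i-m) * ((2*j+1 : ℕ) : ℚ) * ((i+m+1 : ℕ) : ℚ) / ((i-j : ℕ) : ℚ) / ((i+j+1 : ℕ) : ℚ)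
        * ((i+m).choose (2*m+1) : ℚ) * ((2*m+1).choose (m-j) : ℚ) := by
  intro m hm
  induction m, hm using Nat.le_induction with
  | base =>
    intro _
    rw [Finset.Icc_self, Finset.sum_singleton]
    exact keyb' i j hj
  | succ m hm ih =>
    intro h
    rw [Finset.sum_Icc_succ_top (by omega : j ≤ m + 1), ih (by omega),
      show 2*(m+1)+1 = 2*m+1+2 from rfl]
    have := step_eq i j m hm (by omega)
    rw [show 2*(m+1)+1 = 2*m+1+2 from rfl] at this
    exact this

theorem stmt_6 (i j : ℕ) (hij : j ≤ i) :
    ∑ k ∈ Finset.Icc j i,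
        (-1 : ℚ) ^ (i - k) * (Nat.choose (i + k) (i - k) : ℚ) * genCatalan (k - j) (2 * j + 1)
      = if i = j then 1 else 0 := by
  rcases hij.eq_or_lt with rfl | h
  · rw [if_pos rfl, Finset.Icc_self, Finset.sum_singleton]
    simp only [Nat.sub_self, pow_zero, Nat.choose_zero_right, Nat.cast_one, one_mul, mul_one,
      genCatalan]
    have : ((2*j+1 : ℕ) : ℚ) ≠ 0 := by positivity
    simp only [Nat.mul_zero, Nat.zero_add, Nat.choose_zero_right, Nat.cast_one, mul_one]
    field_simp
  · rw [if_neg (by omega : ¬ i = j)]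
    rw [Finset.sum_congr rfl (fun k hk => by
      simp only [Finset.mem_Icc] at hk
      rw [genCatalan, show 2*(k-j) + (2*j+1) = 2*k+1 by omega])]
    rw [tele i j h i (le_of_lt h) le_rfl]
    rw [show (i+i).choose (2*i+1) = 0 from Nat.choose_eq_zero_of_lt (by omega)]
    simp
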